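/- For all distinct indices i_1,...,i_k, the vector T_{i_1}∘⋯∘T_{i_{k-1}}(p_{i_k}) ∈ V is invariant under all permutations of (i_1,...,i_k); denoting this common value by P_{i_1,...,i_k}, one has for any two k-tuples of distinct indices (i_1,...,i_k) and (j_1,...,j_k): T_{i_1}∘⋯∘T_{i_k}(P_{j_1,...,j_k}) = T_{j_1}∘⋯∘T_{j_k}(P_{i_1,...,i_k}). In particular the multiplication defined on these vectors by P_{i_1,...,i_k} * v := T_{i_1}∘⋯∘T_{i_k}(v) is commutative. -/

import Mathlib

noncomputable section

/-- The composition `T_{I 1} ∘ T_{I 2} ∘ ⋯ ∘ T_{I m}` of the operators along a tuple of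
indices. -/
def compT {V : Type*} [AddCommGroup V] [Module ℂ V] {n m : ℕ}
    (T : Fin n → Module.End ℂ V) (I : Fin m → Fin n) : Module.End ℂ V :=
  (List.ofFn fun j => T (I j)).prod

/-- The vector `T_{i_1} ∘ ⋯ ∘ T_{i_{k-1}} (p_{i_k})` attached to a `k`-tuple of indices
(here `k = k' + 1`). -/
def PP {V : Type*} [AddCommGroup V] [Module ℂ V] {n k' : ℕ}
    (T : Fin n → Module.End ℂ V) (p : Fin n → V) (I : Fin (k' + 1) → Fin n) : V :=
  compT T (Fin.init I) (p (I (Fin.last k')))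

section Aux

variable {V : Type*} [AddCommGroup V] [Module ℂ V] {n : ℕ}
variable (T : Fin n → Module.End ℂ V) (p : Fin n → V)

/-- Auxiliary: apply the product of operators along a list to `p a`. -/
def gg (l : List (Fin n)) (a : Fin n) : V := ((l.map T).prod) (p a)

variable {T p}

lemma pairwise_commute (hT : ∀ i j, Commute (T i) (T j)) (l : List (Fin n)) :
    (l.map T).Pairwise Commute :=
  List.pairwise_map.mpr (List.pairwise_iff_forall_sublist.mpr fun _ => hT _ _)

lemma gg_perm (hT : ∀ i j, Commute (T i) (T j)) {l l' : List (Fin n)}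
    (h : l.Perm l') (a : Fin n) : gg T p l a = gg T p l' a := by
  unfold gg
  rw [List.Perm.prod_eq' (h.map T) (pairwise_commute hT l)]

lemma gg_swap (hT : ∀ i j, Commute (T i) (T j)) (hp : ∀ i j, T i (p j) = T j (p i))
    (l : List (Fin n)) (x a : Fin n) : gg T p (x :: l) a = gg T p (a :: l) x := by
  unfold gg
  have hx : ((x :: l).map T).prod = (l.map T).prod * T x := by
    rw [List.map_cons, List.prod_cons,
      (Commute.list_prod_right _ _ fun y hy => by
        obtain ⟨i, _, rfl⟩ := List.mem_map.mp hy; exact hT x i).eq]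
  have ha : ((a :: l).map T).prod = (l.map T).prod * T a := by
    rw [List.map_cons, List.prod_cons,
      (Commute.list_prod_right _ _ fun y hy => by
        obtain ⟨i, _, rfl⟩ := List.mem_map.mp hy; exact hT a i).eq]
  rw [hx, ha]
  simp only [Module.End.mul_apply]
  rw [hp x a]

lemma gg_key (hT : ∀ i j, Commute (T i) (T j)) (hp : ∀ i j, T i (p j) = T j (p i))
    {l l' : List (Fin n)} {a a' : Fin n} (h : (a :: l).Perm (a' :: l')) :
    gg T p l a = gg T p l' a' := by
  by_cases hd : a' = a
  · subst hd
    exact gg_perm hT h.cons_inv _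
  · have ha' : a' ∈ l := by
      have := h.symm.subset (List.mem_cons_self (a := a') (l := l'))
      rcases List.mem_cons.mp this with h1 | h1
      · exact absurd h1 hd
      · exact h1
    obtain ⟨l₁, l₂, rfl⟩ := List.append_of_mem ha'
    have hperm : (l₁ ++ a' :: l₂).Perm (a' :: (l₁ ++ l₂)) := List.perm_middle
    have step1 : gg T p (l₁ ++ a' :: l₂) a = gg T p (a' :: (l₁ ++ l₂)) a :=
      gg_perm hT hperm a
    have step2 : gg T p (a' :: (l₁ ++ l₂)) a = gg T p (a :: (l₁ ++ l₂)) a' :=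
      gg_swap hT hp _ _ _
    have hperm2 : (a :: (l₁ ++ l₂)).Perm l' := by
      have h3 : (a' :: a :: (l₁ ++ l₂)).Perm (a' :: l') :=
        ((List.Perm.swap a a' _).trans ((hperm.cons a).symm)).trans h
      exact h3.cons_inv
    rw [step1, step2, gg_perm hT hperm2 a']

lemma PP_eq_gg {k' : ℕ} (I : Fin (k' + 1) → Fin n) :
    PP T p I = gg T p (List.ofFn (Fin.init I)) (I (Fin.last k')) := by
  unfold PP compT gg
  congr 1
  rw [List.map_ofFn]
  rfl

lemma compT_apply {m : ℕ} (I : Fin m → Fin n) (v : V) :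
    compT T I v = ((List.ofFn I).map T).prod v := by
  unfold compT
  rw [List.map_ofFn]
  rfl

lemma ofFn_perm_cons {k' : ℕ} (I : Fin (k' + 1) → Fin n) :
    (List.ofFn I).Perm (I (Fin.last k') :: List.ofFn (Fin.init I)) := by
  rw [List.ofFn_succ' I]
  have : (List.ofFn fun i => I (Fin.castSucc i)) = List.ofFn (Fin.init I) := rfl
  rw [this, List.concat_eq_append]
  exact List.perm_append_comm.trans (by simp)

end Aux

/-- Let `V` be a complex vector space, `T_1,…,T_n` pairwise commuting endomorphisms of `V` and
`p_1,…,p_n ∈ V` vectors with `T_i p_j = T_j p_i` for all `i, j`.  Fix `k = k' + 1 ≥ 1`.  Then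
for distinct indices `i_1,…,i_k` the vector `P_{i_1,…,i_k} := T_{i_1}∘⋯∘T_{i_{k-1}}(p_{i_k})`
is invariant under all permutations of `(i_1,…,i_k)`, and for any two `k`-tuples of distinct
indices `(i_1,…,i_k)` and `(j_1,…,j_k)` one has
`T_{i_1}∘⋯∘T_{i_k}(P_{j_1,…,j_k}) = T_{j_1}∘⋯∘T_{j_k}(P_{i_1,…,i_k})`; in particular the
multiplication `P_{i_1,…,i_k} * v := T_{i_1}∘⋯∘T_{i_k}(v)` is commutative on these vectors. -/
theorem stmt2 {V : Type*} [AddCommGroup V] [Module ℂ V] (n k' : ℕ)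
    (T : Fin n → Module.End ℂ V) (hT : ∀ i j, Commute (T i) (T j))
    (p : Fin n → V) (hp : ∀ i j, T i (p j) = T j (p i)) :
    (∀ I : Fin (k' + 1) → Fin n, Function.Injective I →
      ∀ σ : Equiv.Perm (Fin (k' + 1)), PP T p (I ∘ σ) = PP T p I) ∧
    (∀ I J : Fin (k' + 1) → Fin n, Function.Injective I → Function.Injective J →
      compT T I (PP T p J) = compT T J (PP T p I)) := by
  constructor
  · intro I _ σ
    rw [PP_eq_gg, PP_eq_gg]
    apply gg_key hT hp
    exact ((ofFn_perm_cons (I ∘ σ)).symm.trans (σ.ofFn_comp_perm I)).trans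
      (ofFn_perm_cons I)
  · intro I J _ _
    rw [PP_eq_gg, PP_eq_gg, compT_apply, compT_apply]
    have h1 : ((List.ofFn I).map T).prod (gg T p (List.ofFn (Fin.init J)) (J (Fin.last k')))
        = gg T p (List.ofFn I ++ List.ofFn (Fin.init J)) (J (Fin.last k')) := by
      unfold gg
      rw [List.map_append, List.prod_append, Module.End.mul_apply]
    have h2 : ((List.ofFn J).map T).prod (gg T p (List.ofFn (Fin.init I)) (I (Fin.last k')))
        = gg T p (List.ofFn J ++ List.ofFn (Fin.init I)) (I (Fin.last k')) := by
      unfold gg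
      rw [List.map_append, List.prod_append, Module.End.mul_apply]
    rw [h1, h2]
    apply gg_key hT hp
    exact ((((List.perm_middle.symm.trans
      (List.Perm.append_left _ (ofFn_perm_cons J).symm)).trans
      List.perm_append_comm).trans
      (List.Perm.append_left _ (ofFn_perm_cons I))).trans
      List.perm_middle)
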